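/- Every at most countable subset C ⊆ [0,1] occurs as the set of stop values of some reparametrization of [0,1]. -/

import Mathlib

open Set Classical

/-- A reparametrization of the unit interval: continuous, weakly increasing,
maps `[0,1]` into `[0,1]`, preserves endpoints. -/
def Reparam (φ : ℝ → ℝ) : Prop :=
  ContinuousOn φ (Set.Icc 0 1) ∧ MonotoneOn φ (Set.Icc 0 1) ∧
  Set.MapsTo φ (Set.Icc 0 1) (Set.Icc 0 1) ∧ φ 0 = 0 ∧ φ 1 = 1

/-- `J` is a stop interval of `φ`: a non-degenerate preimage of a point. -/
def IsStopIntervalOf (φ : ℝ → ℝ) (J : Set ℝ) : Prop :=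
  ∃ t : ℝ, Set.Icc 0 1 ∩ φ ⁻¹' {t} = J ∧ J.Nontrivial

/-- `t` is a stop value of `φ`. -/
def IsStopValueOf (φ : ℝ → ℝ) (t : ℝ) : Prop :=
  (Set.Icc 0 1 ∩ φ ⁻¹' {t}).Nontrivial

/-- The natural order on disjoint intervals: every point of `J` is below every point of `J'`. -/
def IntLT (J J' : Set ℝ) : Prop := ∀ x ∈ J, ∀ y ∈ J', x < y

/-- Supremum with the convention that the sup of the empty family is `0`. -/
noncomputable def sSup0 (S : Set ℝ) : ℝ := if S.Nonempty then sSup S else 0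

/-- Infimum with the convention that the inf of the empty family is `1`. -/
noncomputable def sInf1 (S : Set ℝ) : ℝ := if S.Nonempty then sInf S else 1

namespace StopAux

noncomputable def eps (n : ℕ) : ℝ := 1 / 2 / 2 ^ n
lemma eps_pos (n : ℕ) : 0 < eps n := by unfold eps; positivity
lemma eps_summable : Summable eps := summable_geometric_two' 1
lemma eps_tsum : ∑' n, eps n = 1 := tsum_geometric_two' 1
lemma summable_ind (P : ℕ → Prop) :
    Summable (fun n => if P n then eps n else 0) := by
  apply Summable.of_nonneg_of_le (fun n => ?_) (fun n => ?_) eps_summable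
  · split
    · exact (eps_pos n).le
    · exact le_rfl
  · split
    · exact le_rfl
    · exact (eps_pos n).le
lemma tsum_ind_nonneg (P : ℕ → Prop) :
    0 ≤ ∑' n, if P n then eps n else 0 := by
  apply tsum_nonneg
  intro n; split
  · exact (eps_pos n).le
  · exact le_rfl
lemma tsum_ind_le_one (P : ℕ → Prop) :
    (∑' n, if P n then eps n else 0) ≤ 1 := by
  rw [← eps_tsum]
  apply Summable.tsum_le_tsum _ (summable_ind P) eps_summable
  intro n; split
  · exact le_rfl
  · exact (eps_pos n).le
lemma tail_small {η : ℝ} (hη : 0 < η) :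
    ∃ F : Finset ℕ, (∑' n : {x // x ∉ F}, eps n) < η := by
  have h := eps_summable.hasSum
  have h2 : ∀ᶠ F : Finset ℕ in Filter.atTop,
      (∑' n, eps n) - η < ∑ n ∈ F, eps n :=
    h.eventually (eventually_gt_nhds (sub_lt_self _ hη))
  obtain ⟨F, hF⟩ := h2.exists
  refine ⟨F, ?_⟩
  have h3 := Summable.sum_add_tsum_subtype_compl eps_summable F
  linarith

variable (f : ℕ → ℝ)

noncomputable def psi (t : ℝ) : ℝ := t + ∑' n, if f n < t then eps n else 0
noncomputable def psip (t : ℝ) : ℝ := t + ∑' n, if f n ≤ t then eps n else 0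

lemma tsum_ind_mono {P Q : ℕ → Prop} (h : ∀ n, P n → Q n) :
    (∑' n, if P n then eps n else 0) ≤ ∑' n, if Q n then eps n else 0 := by
  apply Summable.tsum_le_tsum _ (summable_ind P) (summable_ind Q)
  intro n
  by_cases hp : P n
  · rw [if_pos hp, if_pos (h n hp)]
  · rw [if_neg hp]
    split
    · exact (eps_pos n).le
    · exact le_rfl

lemma psi_strictMono : StrictMono (psi f) := by
  intro s t hst
  have := tsum_ind_mono (P := fun n => f n < s) (Q := fun n => f n < t)
    (fun n h => h.trans hst)
  unfold psi; linarith

lemma psi_le_psip (t : ℝ) : psi f t ≤ psip f t := by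
  have := tsum_ind_mono (P := fun n => f n < t) (Q := fun n => f n ≤ t)
    (fun n h => h.le)
  unfold psi psip; linarith

lemma psip_lt_psi {t s : ℝ} (h : t < s) : psip f t < psi f s := by
  have := tsum_ind_mono (P := fun n => f n ≤ t) (Q := fun n => f n < s)
    (fun n hn => lt_of_le_of_lt hn h)
  unfold psi psip; linarith

lemma psi_nonneg {t : ℝ} (ht : 0 ≤ t) : 0 ≤ psi f t := by
  have := tsum_ind_nonneg (fun n => f n < t)
  unfold psi; linarith

lemma psi_le_add_one (t : ℝ) : psi f t ≤ t + 1 := by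
  have := tsum_ind_le_one (fun n => f n < t)
  unfold psi; linarith

lemma psip_le_add_one (t : ℝ) : psip f t ≤ t + 1 := by
  have := tsum_ind_le_one (fun n => f n ≤ t)
  unfold psip; linarith

lemma psi_zero (h0 : ∀ n, 0 ≤ f n) : psi f 0 = 0 := by
  unfold psi
  have : ∀ n, (if f n < 0 then eps n else 0) = 0 := by
    intro n; rw [if_neg (not_lt.2 (h0 n))]
  simp [this]

lemma psip_one (h1 : ∀ n, f n ≤ 1) : psip f 1 = 2 := by
  unfold psip
  have : ∀ n, (if f n ≤ 1 then eps n else 0) = eps n := by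
    intro n; rw [if_pos (h1 n)]
  simp only [this]
  rw [eps_tsum]; norm_num

lemma jump_of_mem {t : ℝ} (h : ∃ n, f n = t) : psi f t < psip f t := by
  obtain ⟨n0, hn0⟩ := h
  have key : (∑' n, if f n < t then eps n else 0) + eps n0
      ≤ ∑' n, if f n ≤ t then eps n else 0 := by
    have hsum : (∑' n, if f n < t then eps n else 0) + eps n0
        = ∑' n, ((if f n < t then eps n else 0) + (if n = n0 then eps n0 else 0)) := by
      rw [Summable.tsum_add (summable_ind _) ?_, tsum_ite_eq]
      · exact Summable.of_nonneg_of_le (fun n => by split <;> [exact (eps_pos n0).le; exact le_rfl])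
          (fun n => by split
                       · rename_i h; subst h; exact le_rfl
                       · exact (eps_pos n).le) eps_summable
    rw [hsum]
    apply Summable.tsum_le_tsum _ ?_ (summable_ind _)
    · intro n
      by_cases hn : n = n0
      · subst hn
        rw [if_neg (lt_irrefl _ ∘ (hn0 ▸ ·)), if_pos rfl, if_pos (le_of_eq hn0), zero_add]
      · rw [if_neg hn, add_zero]
        by_cases hf : f n < t
        · rw [if_pos hf, if_pos hf.le]
        · rw [if_neg hf]
          split
          · exact (eps_pos n).le
          · exact le_rfl
    · apply Summable.add (summable_ind _)
      exact Summable.of_nonneg_of_le (fun n => by split <;> [exact (eps_pos n0).le; exact le_rfl])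
          (fun n => by split
                       · rename_i h; subst h; exact le_rfl
                       · exact (eps_pos n).le) eps_summable
  have := eps_pos n0
  unfold psi psip; linarith

lemma no_jump {t : ℝ} (h : ∀ n, f n ≠ t) : psip f t = psi f t := by
  unfold psi psip
  congr 1
  apply tsum_congr
  intro n
  by_cases hf : f n < t
  · rw [if_pos hf, if_pos hf.le]
  · rw [if_neg hf, if_neg (fun hle => hf (lt_of_le_of_ne hle (h n)))]

lemma psi_left {t y : ℝ} (h : ∀ s, s < t → psi f s ≤ y) : psi f t ≤ y := by
  refine le_of_forall_pos_le_add fun η hη => ?_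
  obtain ⟨F, hF⟩ := tail_small (η := η / 2) (by linarith)
  classical
  set F1 := F.filter (fun n => f n < t) with hF1
  set W : Finset ℝ := insert (t - η / 2) (F1.image f) with hW
  have hWne : W.Nonempty := ⟨_, Finset.mem_insert_self _ _⟩
  set M := W.max' hWne with hM
  have hMlt : M < t := by
    rw [Finset.max'_lt_iff]
    intro x hx
    rw [hW, Finset.mem_insert] at hx
    rcases hx with rfl | hx
    · linarith
    · obtain ⟨n, hn, rfl⟩ := Finset.mem_image.1 hx
      exact (Finset.mem_filter.1 hn).2
  set s := (M + t) / 2 with hs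
  have hst : s < t := by rw [hs]; linarith
  have hMs : M < s := by rw [hs]; linarith
  have htM : t - η / 2 ≤ M := W.le_max' _ (Finset.mem_insert_self _ _)
  have hts : t - s ≤ η / 2 := by rw [hs]; linarith
  -- compare the tsums
  have hsub := Summable.sum_add_tsum_subtype_compl (summable_ind (fun n => f n < t)) F
  have h2 : (∑ n ∈ F, if f n < t then eps n else 0)
      ≤ ∑ n ∈ F, if f n < s then eps n else 0 := by
    apply Finset.sum_le_sum
    intro n hn
    by_cases hfn : f n < t
    · have hmem : f n ∈ W := by
        rw [hW]
        exact Finset.mem_insert_of_mem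
          (Finset.mem_image_of_mem f (Finset.mem_filter.2 ⟨hn, hfn⟩))
      have : f n ≤ M := W.le_max' _ hmem
      rw [if_pos hfn, if_pos (lt_of_le_of_lt this hMs)]
    · rw [if_neg hfn]
      split
      · exact (eps_pos n).le
      · exact le_rfl
  have h3 : (∑' n : {x // x ∉ F}, if f (n : ℕ) < t then eps (n : ℕ) else 0)
      ≤ ∑' n : {x // x ∉ F}, eps (n : ℕ) := by
    apply Summable.tsum_le_tsum _ ((summable_ind (fun n => f n < t)).subtype _)
      (eps_summable.subtype _)
    intro n
    simp only [Function.comp_apply]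
    split
    · exact le_rfl
    · exact (eps_pos _).le
  have h4 : (∑ n ∈ F, if f n < s then eps n else 0)
      ≤ ∑' n, if f n < s then eps n else 0 := by
    apply Summable.sum_le_tsum _ _ (summable_ind _)
    intro n _
    split
    · exact (eps_pos n).le
    · exact le_rfl
  have hys := h s hst
  unfold psi at hys ⊢
  linarith

lemma psi_right {t y : ℝ} (ht1 : t < 1) (hy : psip f t < y) :
    ∃ s, t < s ∧ s ≤ 1 ∧ psi f s ≤ y := by
  set η := (y - psip f t) / 2 with hηdef
  have hη : 0 < η := by rw [hηdef]; linarith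
  obtain ⟨F, hF⟩ := tail_small hη
  classical
  set F1 := F.filter (fun n => t < f n) with hF1
  set W : Finset ℝ := insert (t + η) (insert 1 (F1.image f)) with hW
  have hWne : W.Nonempty := ⟨_, Finset.mem_insert_self _ _⟩
  set M := W.min' hWne with hM
  have hMgt : t < M := by
    rw [Finset.lt_min'_iff]
    intro x hx
    rw [hW, Finset.mem_insert, Finset.mem_insert] at hx
    rcases hx with rfl | rfl | hx
    · linarith
    · exact ht1
    · obtain ⟨n, hn, rfl⟩ := Finset.mem_image.1 hx
      exact (Finset.mem_filter.1 hn).2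
  set s := (t + M) / 2 with hs
  have hts : t < s := by rw [hs]; linarith
  have hsM : s < M := by rw [hs]; linarith
  have hMη : M ≤ t + η := W.min'_le _ (Finset.mem_insert_self _ _)
  have hM1 : M ≤ 1 := W.min'_le _ (by
    rw [hW]; exact Finset.mem_insert_of_mem (Finset.mem_insert_self _ _))
  have hs1 : s ≤ 1 := le_trans hsM.le hM1
  have hsη : s ≤ t + η := le_trans hsM.le hMη
  refine ⟨s, hts, hs1, ?_⟩
  have hsub := Summable.sum_add_tsum_subtype_compl (summable_ind (fun n => f n < s)) F
  have h2 : (∑ n ∈ F, if f n < s then eps n else 0)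
      ≤ ∑ n ∈ F, if f n ≤ t then eps n else 0 := by
    apply Finset.sum_le_sum
    intro n hn
    by_cases hfn : f n < s
    · have hle : f n ≤ t := by
        by_contra hgt
        push_neg at hgt
        have hmem : f n ∈ W := by
          rw [hW]
          exact Finset.mem_insert_of_mem (Finset.mem_insert_of_mem
            (Finset.mem_image_of_mem f (Finset.mem_filter.2 ⟨hn, hgt⟩)))
        have : M ≤ f n := W.min'_le _ hmem
        exact absurd hfn (not_lt.2 (le_trans hsM.le this))
      rw [if_pos hfn, if_pos hle]
    · rw [if_neg hfn]
      split
      · exact (eps_pos n).le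
      · exact le_rfl
  have h3 : (∑' n : {x // x ∉ F}, if f (n : ℕ) < s then eps (n : ℕ) else 0)
      ≤ ∑' n : {x // x ∉ F}, eps (n : ℕ) := by
    apply Summable.tsum_le_tsum _ ((summable_ind (fun n => f n < s)).subtype _)
      (eps_summable.subtype _)
    intro n
    simp only [Function.comp_apply]
    split
    · exact le_rfl
    · exact (eps_pos _).le
  have h4 : (∑ n ∈ F, if f n ≤ t then eps n else 0)
      ≤ ∑' n, if f n ≤ t then eps n else 0 := by
    apply Summable.sum_le_tsum _ _ (summable_ind _)
    intro n _
    split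
    · exact (eps_pos n).le
    · exact le_rfl
  unfold psi
  unfold psip at hηdef
  have hηdef' : y = t + (∑' n, if f n ≤ t then eps n else 0) + 2 * η := by
    rw [hηdef]; ring
  linarith

noncomputable def gg (y : ℝ) : ℝ := sSup {s : ℝ | s ∈ Icc (0:ℝ) 1 ∧ psi f s ≤ y}

lemma gg_set_bdd (y : ℝ) : BddAbove {s : ℝ | s ∈ Icc (0:ℝ) 1 ∧ psi f s ≤ y} :=
  ⟨1, fun s hs => hs.1.2⟩

lemma gg_set_nonempty (h0 : ∀ n, 0 ≤ f n) {y : ℝ} (hy : 0 ≤ y) :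
    {s : ℝ | s ∈ Icc (0:ℝ) 1 ∧ psi f s ≤ y}.Nonempty :=
  ⟨0, ⟨⟨le_rfl, zero_le_one⟩, by rw [psi_zero f h0]; exact hy⟩⟩

lemma gg_mem (h0 : ∀ n, 0 ≤ f n) {y : ℝ} (hy : 0 ≤ y) : gg f y ∈ Icc (0:ℝ) 1 := by
  constructor
  · exact le_csSup (gg_set_bdd f y) ⟨⟨le_rfl, zero_le_one⟩, by rw [psi_zero f h0]; exact hy⟩
  · exact csSup_le (gg_set_nonempty f h0 hy) (fun s hs => hs.1.2)

lemma gg_mono : Monotone (gg f) := by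
  intro a b hab
  by_cases hA : {s : ℝ | s ∈ Icc (0:ℝ) 1 ∧ psi f s ≤ a}.Nonempty
  · exact csSup_le_csSup (gg_set_bdd f b) hA
      (fun s hs => ⟨hs.1, hs.2.trans hab⟩)
  · rw [Set.not_nonempty_iff_eq_empty] at hA
    unfold gg
    rw [hA, Real.sSup_empty]
    by_cases hB : {s : ℝ | s ∈ Icc (0:ℝ) 1 ∧ psi f s ≤ b}.Nonempty
    · obtain ⟨s, hs⟩ := hB
      exact le_trans hs.1.1 (le_csSup (gg_set_bdd f b) hs)
    · rw [Set.not_nonempty_iff_eq_empty] at hB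
      rw [hB, Real.sSup_empty]

lemma gg_psi {t : ℝ} (ht : t ∈ Icc (0:ℝ) 1) : gg f (psi f t) = t := by
  unfold gg
  have hset : {s : ℝ | s ∈ Icc (0:ℝ) 1 ∧ psi f s ≤ psi f t} = Icc 0 t := by
    ext s
    constructor
    · rintro ⟨hsI, hle⟩
      exact ⟨hsI.1, ((psi_strictMono f).le_iff_le).1 hle⟩
    · rintro ⟨h0s, hst⟩
      exact ⟨⟨h0s, hst.trans ht.2⟩, (psi_strictMono f).monotone hst⟩
  rw [hset, csSup_Icc ht.1]

lemma gg_psip {t : ℝ} (ht : t ∈ Icc (0:ℝ) 1) : gg f (psip f t) = t := by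
  unfold gg
  have hset : {s : ℝ | s ∈ Icc (0:ℝ) 1 ∧ psi f s ≤ psip f t} = Icc 0 t := by
    ext s
    constructor
    · rintro ⟨hsI, hle⟩
      refine ⟨hsI.1, ?_⟩
      by_contra hst
      push_neg at hst
      exact absurd hle (not_le.2 (psip_lt_psi f hst))
    · rintro ⟨h0s, hst⟩
      exact ⟨⟨h0s, hst.trans ht.2⟩,
        le_trans ((psi_strictMono f).monotone hst) (psi_le_psip f t)⟩
  rw [hset, csSup_Icc ht.1]

lemma gg_two {y : ℝ} (hy : 2 ≤ y) : gg f y = 1 := by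
  unfold gg
  have hset : {s : ℝ | s ∈ Icc (0:ℝ) 1 ∧ psi f s ≤ y} = Icc 0 1 := by
    ext s
    constructor
    · rintro ⟨hsI, _⟩; exact hsI
    · intro hsI
      refine ⟨hsI, le_trans (psi_le_add_one f s) ?_⟩
      linarith [hsI.2]
  rw [hset, csSup_Icc zero_le_one]

lemma gg_zero (h0 : ∀ n, 0 ≤ f n) {y : ℝ} (hy : y ≤ 0) : gg f y = 0 := by
  unfold gg
  have hsub : {s : ℝ | s ∈ Icc (0:ℝ) 1 ∧ psi f s ≤ y} ⊆ {0} := by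
    intro s hs
    rcases eq_or_lt_of_le hs.1.1 with h | h
    · exact h.symm
    · exfalso
      have := psi_strictMono f h
      rw [psi_zero f h0] at this
      have := hs.2
      change psi f s ≤ y at this
      linarith
  rcases (Set.subset_singleton_iff_eq).1 hsub with h | h
  · rw [h, Real.sSup_empty]
  · rw [h, csSup_singleton]

noncomputable def GG (y : ℝ) : ℝ := min 0 y + gg f y + max 0 (y - 2)

lemma GG_mono : Monotone (GG f) := fun a b hab =>
  add_le_add (add_le_add (min_le_min le_rfl hab) (gg_mono f hab))
    (max_le_max le_rfl (by linarith))

lemma GG_surj (h0 : ∀ n, 0 ≤ f n) : Function.Surjective (GG f) := by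
  intro z
  rcases le_or_gt z 0 with hz | hz
  · refine ⟨z, ?_⟩
    unfold GG
    rw [gg_zero f h0 hz, min_eq_right hz, max_eq_left (by linarith)]
    ring
  rcases le_or_gt z 1 with hz1 | hz1
  · refine ⟨psi f z, ?_⟩
    have h1 : 0 ≤ psi f z := psi_nonneg f hz.le
    have h2 : psi f z ≤ 2 := (psi_le_add_one f z).trans (by linarith)
    unfold GG
    rw [gg_psi f ⟨hz.le, hz1⟩, min_eq_left h1, max_eq_left (by linarith)]
    ring
  · refine ⟨z + 1, ?_⟩
    unfold GG
    rw [gg_two f (by linarith), min_eq_left (by linarith),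
      max_eq_right (by linarith)]
    ring

lemma gg_continuousOn (h0 : ∀ n, 0 ≤ f n) : ContinuousOn (gg f) (Icc 0 2) := by
  have hG : Continuous (GG f) := (GG_mono f).continuous_of_surjective (GG_surj f h0)
  apply hG.continuousOn.congr
  intro y hy
  unfold GG
  rw [min_eq_left hy.1, max_eq_left (by linarith [hy.2])]
  ring

end StopAux


open StopAux in
/-- Every at most countable subset `C ⊆ [0,1]` is the set of stop values of
some reparametrization. -/
theorem stmt_12 (C : Set ℝ) (hC : C ⊆ Set.Icc 0 1) (hcount : C.Countable) :
    ∃ φ : ℝ → ℝ, Reparam φ ∧ {t | IsStopValueOf φ t} = C := by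
  rcases C.eq_empty_or_nonempty with rfl | hne
  · refine ⟨id, ⟨continuous_id.continuousOn, fun a _ b _ h => h,
      fun x hx => hx, rfl, rfl⟩, ?_⟩
    ext t
    simp only [mem_setOf_eq, mem_empty_iff_false, iff_false]
    intro h
    have hsub : (Set.Icc (0:ℝ) 1 ∩ id ⁻¹' {t}) ⊆ {t} := fun x hx => hx.2
    exact h.not_subsingleton (Set.subsingleton_singleton.anti hsub)
  · obtain ⟨f, hfC⟩ := hcount.exists_eq_range hne
    have hf01 : ∀ n, f n ∈ Set.Icc (0:ℝ) 1 := fun n => hC (by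
      rw [hfC]; exact Set.mem_range_self n)
    have h0 : ∀ n, 0 ≤ f n := fun n => (hf01 n).1
    have h1 : ∀ n, f n ≤ 1 := fun n => (hf01 n).2
    refine ⟨fun x => gg f (2 * x), ⟨?_, ?_, ?_, ?_, ?_⟩, ?_⟩
    · exact (gg_continuousOn f h0).comp
        ((continuous_const.mul continuous_id).continuousOn)
        (fun x hx => ⟨by linarith [hx.1], by linarith [hx.2]⟩)
    · exact fun a _ b _ hab => gg_mono f (by linarith)
    · intro x hx
      exact gg_mem f h0 (by linarith [hx.1])
    · show gg f (2 * 0) = 0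
      rw [mul_zero]
      exact gg_zero f h0 le_rfl
    · show gg f (2 * 1) = 1
      rw [mul_one]
      exact gg_two f le_rfl
    · ext t
      simp only [mem_setOf_eq]
      constructor
      · rintro ⟨x₁, hx₁, x₂, hx₂, hne12⟩
        have hx₁v : gg f (2 * x₁) = t := hx₁.2
        have hx₂v : gg f (2 * x₂) = t := hx₂.2
        have hx₁I : x₁ ∈ Set.Icc (0:ℝ) 1 := hx₁.1
        have hx₂I : x₂ ∈ Set.Icc (0:ℝ) 1 := hx₂.1
        have main : ∀ a b : ℝ, a ∈ Set.Icc (0:ℝ) 1 → b ∈ Set.Icc (0:ℝ) 1 →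
            a < b → gg f (2 * a) = t → gg f (2 * b) = t → t ∈ C := by
          intro a b haI hbI hab hga hgb
          have hy1 : (0:ℝ) ≤ 2 * a := by linarith [haI.1]
          have hy2 : 2 * b ≤ 2 := by linarith [hbI.2]
          have htI : t ∈ Set.Icc (0:ℝ) 1 := hga ▸ gg_mem f h0 hy1
          have claim1 : psi f t ≤ 2 * a := by
            apply psi_left f
            intro s hs
            have hlt : s < gg f (2 * a) := by rw [hga]; exact hs
            obtain ⟨u, hu, hsu⟩ :=
              exists_lt_of_lt_csSup (gg_set_nonempty f h0 hy1) hlt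
            exact le_trans (psi_strictMono f hsu).le hu.2
          have claim2 : 2 * b ≤ psip f t := by
            by_contra hlt
            push_neg at hlt
            rcases lt_or_eq_of_le htI.2 with ht1 | ht1
            · obtain ⟨s, hts, hs1, hps⟩ := psi_right f ht1 hlt
              have hmem : s ∈ {u : ℝ | u ∈ Set.Icc (0:ℝ) 1 ∧ psi f u ≤ 2 * b} :=
                ⟨⟨le_trans htI.1 (le_of_lt hts), hs1⟩, hps⟩
              have hle : s ≤ gg f (2 * b) := le_csSup (gg_set_bdd f (2 * b)) hmem
              rw [hgb] at hle
              linarith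
            · rw [ht1, psip_one f h1] at hlt
              linarith
          have hjump : psi f t < psip f t := by linarith
          by_contra htC
          have hno : ∀ n, f n ≠ t := by
            intro n hn
            exact htC (by rw [hfC]; exact ⟨n, hn⟩)
          rw [no_jump f hno] at hjump
          exact lt_irrefl _ hjump
        rcases hne12.lt_or_gt with h | h
        · exact main x₁ x₂ hx₁I hx₂I h hx₁v hx₂v
        · exact main x₂ x₁ hx₂I hx₁I h hx₂v hx₁v
      · intro htC
        have htI := hC htC
        have hex : ∃ n, f n = t := by rw [hfC] at htC; exact htC
        have hjump := jump_of_mem f hex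
        have ha0 : 0 ≤ psi f t := psi_nonneg f htI.1
        have hb2 : psip f t ≤ 2 := (psip_le_add_one f t).trans (by linarith [htI.2])
        have hab : psi f t ≤ psip f t := psi_le_psip f t
        refine ⟨psi f t / 2, ⟨⟨by linarith, by linarith⟩, ?_⟩,
          psip f t / 2, ⟨⟨by linarith, by linarith⟩, ?_⟩, by
            intro h
            have : psi f t = psip f t := by
              field_simp at h
              linarith
            linarith⟩
        · show gg f (2 * (psi f t / 2)) = t
          rw [show 2 * (psi f t / 2) = psi f t by ring]
          exact gg_psi f htI
        · show gg f (2 * (psip f t / 2)) = t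
          rw [show 2 * (psip f t / 2) = psip f t by ring]
          exact gg_psip f htI
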